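/- Let T = (1,...,d,t,0) be a single-block Hilbert function, s = d+1-t, δ = max{t+1-s, 0}. The number of partitions P of diagonal lengths T with κ(P) = s+δ (the non-special partitions) equals binom(s+t, s) - binom(s+t, s+δ+1). -/

import Mathlib

open Finset

/-- number of elements of `A` below `m` -/
def upc {n : ℕ} (A : Finset (Fin n)) (m : ℕ) : ℕ :=
  (A.filter fun i : Fin n => (i : ℕ) < m).card

lemma card_filter_val_lt (N k : ℕ) (hk : k ≤ N) :
    (Finset.univ.filter fun i : Fin N => (i : ℕ) < k).card = k := by
  have : (Finset.univ.filter fun i : Fin N => (i : ℕ) < k)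
      = Finset.univ.image (Fin.castLE hk) := by
    ext i
    simp only [mem_filter, mem_univ, true_and, mem_image]
    constructor
    · intro h; exact ⟨⟨(i : ℕ), h⟩, Fin.ext rfl⟩
    · rintro ⟨j, rfl⟩; exact j.isLt
  rw [this, Finset.card_image_of_injective _ (Fin.castLE_injective hk), card_univ,
    Fintype.card_fin]

lemma upc_zero {n : ℕ} (A : Finset (Fin n)) : upc A 0 = 0 := by simp [upc]

lemma upc_le_card {n : ℕ} (A : Finset (Fin n)) (m : ℕ) : upc A m ≤ A.card :=
  Finset.card_le_card (Finset.filter_subset _ _)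

lemma upc_le_self {n : ℕ} (A : Finset (Fin n)) (m : ℕ) : upc A m ≤ m := by
  have h : (A.filter fun i : Fin n => (i : ℕ) < m).card ≤ (Finset.range m).card :=
    Finset.card_le_card_of_injOn (fun i : Fin n => (i : ℕ))
      (fun x hx => Finset.mem_range.mpr (Finset.mem_filter.mp hx).2)
      (fun x _ y _ h => Fin.ext h)
  simpa [upc] using h

lemma upc_mono {n : ℕ} (A : Finset (Fin n)) {m m' : ℕ} (h : m ≤ m') : upc A m ≤ upc A m' := by
  refine Finset.card_le_card (Finset.monotone_filter_right A ?_)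
  intro i _ hi; exact lt_of_lt_of_le hi h

lemma upc_of_le {n : ℕ} (A : Finset (Fin n)) {m : ℕ} (h : n ≤ m) : upc A m = A.card := by
  unfold upc
  rw [Finset.filter_true_of_mem]
  intro i _; exact lt_of_lt_of_le i.isLt h

lemma upc_succ_le {n : ℕ} (A : Finset (Fin n)) (m : ℕ) : upc A (m + 1) ≤ upc A m + 1 := by
  have h1 : A.filter (fun i : Fin n => (i : ℕ) < m + 1)
      = A.filter (fun i : Fin n => (i : ℕ) < m) ∪ A.filter (fun i : Fin n => (i : ℕ) = m) := by
    rw [← Finset.filter_or]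
    apply Finset.filter_congr
    intro i _
    constructor <;> (intro h; omega)
  have h2 : (A.filter (fun i : Fin n => (i : ℕ) = m)).card ≤ 1 := by
    refine Finset.card_le_one.mpr ?_
    intro a ha b hb
    have ha' := (Finset.mem_filter.mp ha).2
    have hb' := (Finset.mem_filter.mp hb).2
    apply Fin.ext; omega
  calc upc A (m+1)
      = (A.filter (fun i : Fin n => (i : ℕ) < m)
          ∪ A.filter (fun i : Fin n => (i : ℕ) = m)).card := by rw [upc, h1]
    _ ≤ (A.filter (fun i : Fin n => (i : ℕ) < m)).card
          + (A.filter (fun i : Fin n => (i : ℕ) = m)).card := Finset.card_union_le _ _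
    _ ≤ upc A m + 1 := Nat.add_le_add_left h2 _

/-- flip membership at positions `≥ m` -/
def flipA {n : ℕ} (m : ℕ) (A : Finset (Fin n)) : Finset (Fin n) :=
  (A.filter fun i : Fin n => (i : ℕ) < m)
    ∪ (Finset.univ.filter fun i : Fin n => ¬ (i : ℕ) < m ∧ i ∉ A)

lemma mem_flipA {n m : ℕ} {A : Finset (Fin n)} {i : Fin n} :
    i ∈ flipA m A ↔ (((i : ℕ) < m ∧ i ∈ A) ∨ (¬ (i : ℕ) < m ∧ i ∉ A)) := by
  simp only [flipA, Finset.mem_union, Finset.mem_filter, Finset.mem_univ, true_and]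
  tauto

lemma flipA_flipA {n m : ℕ} (A : Finset (Fin n)) : flipA m (flipA m A) = A := by
  ext i
  by_cases h : (i : ℕ) < m <;> simp [mem_flipA, h] <;> tauto

lemma upc_flipA {n m k : ℕ} (A : Finset (Fin n)) (h : k ≤ m) :
    upc (flipA m A) k = upc A k := by
  unfold upc
  congr 1
  ext i
  simp only [Finset.mem_filter, mem_flipA]
  constructor
  · rintro ⟨h1 | h1, h2⟩
    · exact ⟨h1.2, h2⟩
    · omega
  · intro hi; exact ⟨Or.inl ⟨by omega, hi.1⟩, hi.2⟩

lemma card_flipA {n m : ℕ} (A : Finset (Fin n)) (hm : m ≤ n) :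
    (flipA m A).card + A.card = 2 * upc A m + (n - m) := by
  classical
  -- A split
  have hA : upc A m + (A.filter fun i : Fin n => ¬ (i : ℕ) < m).card = A.card := by
    have := Finset.card_filter_add_card_filter_not (s := A)
      (p := fun i : Fin n => (i : ℕ) < m)
    simpa [upc] using this
  -- flip card
  have hdisj : Disjoint (A.filter fun i : Fin n => (i : ℕ) < m)
      (Finset.univ.filter fun i : Fin n => ¬ (i : ℕ) < m ∧ i ∉ A) := by
    refine Finset.disjoint_left.mpr ?_
    intro a ha hb
    have := (Finset.mem_filter.mp ha).2
    have := (Finset.mem_filter.mp hb).2.1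
    omega
  have hflip : (flipA m A).card
      = upc A m + (Finset.univ.filter fun i : Fin n => ¬ (i : ℕ) < m ∧ i ∉ A).card := by
    rw [flipA, Finset.card_union_of_disjoint hdisj]; rfl
  -- split univ.filter (¬ < m) by membership in A
  have hsplit : ((Finset.univ.filter fun i : Fin n => ¬ (i : ℕ) < m).filter
        fun i : Fin n => i ∈ A).card
      + ((Finset.univ.filter fun i : Fin n => ¬ (i : ℕ) < m).filter
        fun i : Fin n => i ∉ A).card
      = (Finset.univ.filter fun i : Fin n => ¬ (i : ℕ) < m).card := by
    have := Finset.card_filter_add_card_filter_not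
      (s := Finset.univ.filter fun i : Fin n => ¬ (i : ℕ) < m) (p := fun i : Fin n => i ∈ A)
    simpa using this
  have e1 : (Finset.univ.filter fun i : Fin n => ¬ (i : ℕ) < m).filter
        (fun i : Fin n => i ∈ A) = A.filter fun i : Fin n => ¬ (i : ℕ) < m := by
    ext i; simp only [Finset.mem_filter, Finset.mem_univ, true_and]; tauto
  have e2 : (Finset.univ.filter fun i : Fin n => ¬ (i : ℕ) < m).filter
        (fun i : Fin n => i ∉ A)
      = Finset.univ.filter fun i : Fin n => ¬ (i : ℕ) < m ∧ i ∉ A := by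
    ext i; simp only [Finset.mem_filter, Finset.mem_univ, true_and]
  -- card of univ.filter (¬ < m)
  have huniv : (Finset.univ.filter fun i : Fin n => (i : ℕ) < m).card
      + (Finset.univ.filter fun i : Fin n => ¬ (i : ℕ) < m).card
      = n := by
    have := Finset.card_filter_add_card_filter_not
      (s := (Finset.univ : Finset (Fin n))) (p := fun i : Fin n => (i : ℕ) < m)
    simpa using this
  have hlt := card_filter_val_lt n m hm
  rw [e1, e2] at hsplit
  omega

/-- `A` is bad if its path touches the line: some prefix has an excess of exactly `c`. -/
def isBad (n c : ℕ) (A : Finset (Fin n)) : Prop := ∃ m ≤ n, 2 * upc A m = m + c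

instance {n c : ℕ} (A : Finset (Fin n)) : Decidable (isBad n c A) :=
  decidable_of_iff ((Finset.range (n + 1)).filter
      (fun m => 2 * upc A m = m + c)).Nonempty (by
    simp only [Finset.filter_nonempty_iff, isBad, Finset.mem_range, Nat.lt_succ_iff])

lemma exists_touch_of_ge {n c : ℕ} {A : Finset (Fin n)} (hc : 0 < c)
    (h : ∃ m ≤ n, m + c ≤ 2 * upc A m) : isBad n c A := by
  classical
  obtain ⟨m, hmn, hm⟩ := h
  have hex : ∃ m', m' + c ≤ 2 * upc A m' := ⟨m, hm⟩
  have hspec := Nat.find_spec hex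
  have hle : Nat.find hex ≤ m := Nat.find_min' hex hm
  refine ⟨Nat.find hex, le_trans hle hmn, ?_⟩
  rcases Nat.eq_zero_or_pos (Nat.find hex) with h0 | hpos
  · rw [h0] at hspec ⊢
    have := upc_zero A
    omega
  · obtain ⟨k, hk⟩ : ∃ k, Nat.find hex = k + 1 := ⟨Nat.find hex - 1, by omega⟩
    have hmin : ¬ (k + c ≤ 2 * upc A k) := Nat.find_min hex (by omega)
    have hstep := upc_succ_le A k
    rw [hk] at hspec ⊢
    omega

open Classical in
/-- reflection of a bad set at its first touch point -/
noncomputable def reflectA (n c : ℕ) (A : Finset (Fin n)) : Finset (Fin n) :=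
  if h : ∃ m, 2 * upc A m = m + c then flipA (Nat.find h) A else A

lemma reflectA_spec {n c : ℕ} {A : Finset (Fin n)} (hbad : isBad n c A) :
    isBad n c (reflectA n c A) ∧ (reflectA n c A).card + A.card = c + n ∧
      reflectA n c (reflectA n c A) = A := by
  classical
  obtain ⟨m, hmn, hm⟩ := hbad
  have h : ∃ m', 2 * upc A m' = m' + c := ⟨m, hm⟩
  have hfind : Nat.find h ≤ n := le_trans (Nat.find_min' h hm) hmn
  set m₀ := Nat.find h with hm₀
  have hspec : 2 * upc A m₀ = m₀ + c := Nat.find_spec h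
  have hrefl : reflectA n c A = flipA m₀ A := dif_pos h
  have htouch : 2 * upc (flipA m₀ A) m₀ = m₀ + c := by
    rw [upc_flipA A le_rfl]; exact hspec
  have hbad' : isBad n c (flipA m₀ A) := ⟨m₀, hfind, htouch⟩
  refine ⟨hrefl ▸ hbad', ?_, ?_⟩
  · rw [hrefl]
    have := card_flipA A hfind
    omega
  · rw [hrefl]
    have h' : ∃ m', 2 * upc (flipA m₀ A) m' = m' + c := ⟨m₀, htouch⟩
    have hfind' : Nat.find h' = m₀ := by
      refine le_antisymm (Nat.find_min' h' htouch) ?_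
      by_contra hlt
      push_neg at hlt
      have hsp := Nat.find_spec h'
      rw [upc_flipA A (le_of_lt hlt)] at hsp
      exact Nat.find_min h hlt hsp
    rw [reflectA, dif_pos h', hfind', flipA_flipA]

lemma card_filter_val_ge (t a : ℕ) (ha : a ≤ t) :
    (Finset.univ.filter fun j : Fin t => a ≤ (j : ℕ)).card = t - a := by
  have h1 := card_filter_val_lt t a ha
  have h2 := Finset.card_filter_add_card_filter_not
    (s := (Finset.univ : Finset (Fin t))) (p := fun j : Fin t => (j : ℕ) < a)
  have h3 : (Finset.univ.filter fun j : Fin t => ¬ (j : ℕ) < a)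
      = Finset.univ.filter fun j : Fin t => a ≤ (j : ℕ) := by
    apply Finset.filter_congr; intro j _; simp [Nat.not_lt]
  rw [h3] at h2
  simp only [card_univ, Fintype.card_fin] at h2
  omega

lemma strictMono_gap {t : ℕ} {g : Fin t → ℕ} (hg : StrictMono g) (a b : Fin t) (h : a ≤ b) :
    g a + ((b : ℕ) - (a : ℕ)) ≤ g b := by
  obtain ⟨k, hk⟩ := Nat.exists_eq_add_of_le (show (a : ℕ) ≤ (b : ℕ) from h)
  induction k generalizing b with
  | zero =>
    have : a = b := Fin.ext (by omega)
    subst this; simp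
  | succ k ih =>
    have hb1 : (b : ℕ) - 1 < t := by omega
    have h1 : a ≤ (⟨(b : ℕ) - 1, hb1⟩ : Fin t) := by
      rw [Fin.le_def]; simp; omega
    have h2 := ih ⟨(b : ℕ) - 1, hb1⟩ h1 (by simp; omega)
    have h3 : g ⟨(b : ℕ) - 1, hb1⟩ < g b := hg (by rw [Fin.lt_def]; simp; omega)
    simp at h2
    omega

section Phi

variable (s t : ℕ)

/-- the strictly increasing enumeration attached to a hook code -/
def eF (f : Fin t → ℕ) (hbd : ∀ i, f i ≤ s) : Fin t → Fin (s + t) :=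
  fun i => ⟨f i.rev + (i : ℕ), by have := hbd i.rev; have := i.isLt; omega⟩

lemma eF_strictMono {f : Fin t → ℕ} (hmono : Antitone f) (hbd : ∀ i, f i ≤ s) :
    StrictMono (eF s t f hbd) := by
  intro i j hij
  rw [Fin.lt_def]
  show f i.rev + (i : ℕ) < f j.rev + (j : ℕ)
  have h1 : j.rev ≤ i.rev := by
    rw [Fin.le_def]; simp only [Fin.val_rev]; have : (i : ℕ) < j := hij; omega
  have h2 : f i.rev ≤ f j.rev := hmono h1
  have h3 : (i : ℕ) < (j : ℕ) := hij
  omega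

/-- the set attached to a hook code -/
def ΦA (f : Fin t → ℕ) (hbd : ∀ i, f i ≤ s) : Finset (Fin (s + t)) :=
  Finset.image (eF s t f hbd) Finset.univ

lemma ΦA_card {f : Fin t → ℕ} (hmono : Antitone f) (hbd : ∀ i, f i ≤ s) :
    (ΦA s t f hbd).card = t := by
  rw [ΦA, Finset.card_image_of_injective _ (eF_strictMono s t hmono hbd).injective,
    card_univ, Fintype.card_fin]

lemma ΦA_upc {f : Fin t → ℕ} (hmono : Antitone f) (hbd : ∀ i, f i ≤ s) (m : ℕ) :
    upc (ΦA s t f hbd) m = (Finset.univ.filter fun i : Fin t => f i.rev + (i : ℕ) < m).card := by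
  rw [upc, ΦA, Finset.filter_image,
    Finset.card_image_of_injective _ (eF_strictMono s t hmono hbd).injective]
  rfl

end Phi

lemma transfer (s t : ℕ) {f : Fin t → ℕ} (hmono : Antitone f) (hbd : ∀ i, f i ≤ s)
    {c : ℕ} (hc : 0 < c) :
    isBad (s + t) c (ΦA s t f hbd) ↔
      ∃ j : Fin t, f j + c ≤ (Finset.univ.filter fun i : Fin t => f i ≤ f j).card := by
  constructor
  · rintro ⟨m, hmn, hm⟩
    rw [ΦA_upc s t hmono hbd] at hm
    set u := (Finset.univ.filter fun i : Fin t => f i.rev + (i : ℕ) < m).card with hu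
    have hu_le : u ≤ t := by
      have := Finset.card_filter_le Finset.univ (fun i : Fin t => f i.rev + (i : ℕ) < m)
      simpa using this
    have hu_pos : 0 < u := by omega
    have hu1 : u - 1 < t := by omega
    set i₀ : Fin t := ⟨u - 1, hu1⟩ with hi₀
    -- (α) : eF i₀ < m
    have hα : f i₀.rev + (u - 1) < m := by
      by_contra hcon
      push_neg at hcon
      have hsub : (Finset.univ.filter fun i : Fin t => f i.rev + (i : ℕ) < m)
          ⊆ Finset.univ.filter fun i : Fin t => (i : ℕ) < u - 1 := by
        intro i hi
        have hi' := (Finset.mem_filter.mp hi).2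
        simp only [Finset.mem_filter, Finset.mem_univ, true_and]
        by_contra hge
        push_neg at hge
        have hrev : i.rev ≤ i₀.rev := by
          have hval : (i₀ : ℕ) = u - 1 := rfl
          rw [Fin.le_def]; simp only [Fin.val_rev]; omega
        have := hmono hrev
        omega
      have hcard := Finset.card_le_card hsub
      have : (Finset.univ.filter fun i : Fin t => (i : ℕ) < u - 1).card = u - 1 :=
        card_filter_val_lt t (u - 1) (by omega)
      omega
    have hv : f i₀.rev + c ≤ u := by omega
    -- (β) : G (f i₀.rev) ≥ u
    refine ⟨i₀.rev, ?_⟩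
    have hsub : (Finset.univ.filter fun j : Fin t => (i₀.rev : ℕ) ≤ (j : ℕ))
        ⊆ Finset.univ.filter fun j : Fin t => f j ≤ f i₀.rev := by
      intro j hj
      have hj' := (Finset.mem_filter.mp hj).2
      simp only [Finset.mem_filter, Finset.mem_univ, true_and]
      exact hmono (by rw [Fin.le_def]; exact hj')
    have hcard := Finset.card_le_card hsub
    have hrevval : (i₀.rev : ℕ) = t - u := by
      have hval : (i₀ : ℕ) = u - 1 := rfl
      simp only [Fin.val_rev]; omega
    have : (Finset.univ.filter fun j : Fin t => (i₀.rev : ℕ) ≤ (j : ℕ)).card = u := by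
      rw [hrevval, card_filter_val_ge t (t - u) (by omega)]; omega
    omega
  · rintro ⟨j₀, hj₀⟩
    set v := f j₀ with hv
    set g := (Finset.univ.filter fun i : Fin t => f i ≤ v).card with hg
    have hg_le : g ≤ t := by
      have := Finset.card_filter_le Finset.univ (fun i : Fin t => f i ≤ v)
      simpa using this
    have hvs : v ≤ s := hbd j₀
    apply exists_touch_of_ge hc
    refine ⟨v + g, by omega, ?_⟩
    rw [ΦA_upc s t hmono hbd]
    have hsub : (Finset.univ.filter fun i : Fin t => (i : ℕ) < g)
        ⊆ Finset.univ.filter fun i : Fin t => f i.rev + (i : ℕ) < v + g := by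
      intro i hi
      have hi' := (Finset.mem_filter.mp hi).2
      simp only [Finset.mem_filter, Finset.mem_univ, true_and]
      -- subclaim: f i.rev ≤ v
      have hiv : f i.rev ≤ v := by
        by_contra hcon
        push_neg at hcon
        have hsub2 : (Finset.univ.filter fun j : Fin t => f j ≤ v)
            ⊆ Finset.univ.filter fun j : Fin t => (i.rev : ℕ) + 1 ≤ (j : ℕ) := by
          intro j hj
          have hj' := (Finset.mem_filter.mp hj).2
          simp only [Finset.mem_filter, Finset.mem_univ, true_and]
          by_contra hle
          push_neg at hle
          have : j ≤ i.rev := by rw [Fin.le_def]; omega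
          have := hmono this
          omega
        have hcard2 := Finset.card_le_card hsub2
        have hval : ((i.rev : ℕ) + 1) ≤ t := i.rev.isLt
        have := card_filter_val_ge t ((i.rev : ℕ) + 1) hval
        have hrv : (i.rev : ℕ) = t - 1 - (i : ℕ) := by simp [Fin.val_rev]; omega
        omega
      omega
    have hcard := Finset.card_le_card hsub
    have hlt : (Finset.univ.filter fun i : Fin t => (i : ℕ) < g).card = g :=
      card_filter_val_lt t g hg_le
    omega

section Psi

variable {s t : ℕ}

/-- recover the hook code from a set -/
def ΨF (A : Finset (Fin (s + t))) (hA : A.card = t) : Fin t → ℕ :=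
  fun j => ((A.orderEmbOfFin hA) j.rev : ℕ) - (j.rev : ℕ)

lemma gmono (A : Finset (Fin (s + t))) (hA : A.card = t) :
    StrictMono (fun i : Fin t => ((A.orderEmbOfFin hA) i : ℕ)) := by
  intro i j hij
  exact (A.orderEmbOfFin hA).strictMono hij

lemma g_ge (A : Finset (Fin (s + t))) (hA : A.card = t) (i : Fin t) :
    (i : ℕ) ≤ ((A.orderEmbOfFin hA) i : ℕ) := by
  have h0 : (⟨0, i.pos⟩ : Fin t) ≤ i := by rw [Fin.le_def]; simp
  have := strictMono_gap (gmono A hA) ⟨0, i.pos⟩ i h0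
  simp at this
  omega

lemma g_le (A : Finset (Fin (s + t))) (hA : A.card = t) (i : Fin t) :
    ((A.orderEmbOfFin hA) i : ℕ) ≤ s + (i : ℕ) := by
  have ht : 0 < t := i.pos
  have hlast : i ≤ (⟨t - 1, by omega⟩ : Fin t) := by rw [Fin.le_def]; simp; omega
  have h1 := strictMono_gap (gmono A hA) i ⟨t - 1, by omega⟩ hlast
  have h2 : ((A.orderEmbOfFin hA) ⟨t - 1, by omega⟩ : ℕ) < s + t :=
    ((A.orderEmbOfFin hA) ⟨t - 1, by omega⟩).isLt
  simp only at h1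
  have h3 : (i : ℕ) ≤ t - 1 := by omega
  omega

lemma ΨF_antitone (A : Finset (Fin (s + t))) (hA : A.card = t) : Antitone (ΨF A hA) := by
  intro j j' hjj
  unfold ΨF
  have hrev : j'.rev ≤ j.rev := Fin.rev_le_rev.mpr hjj
  have hgap := strictMono_gap (gmono A hA) j'.rev j.rev hrev
  have h1 := g_ge A hA j'.rev
  have h2 : (j'.rev : ℕ) ≤ (j.rev : ℕ) := hrev
  omega

lemma ΨF_le (A : Finset (Fin (s + t))) (hA : A.card = t) (j : Fin t) : ΨF A hA j ≤ s := by
  have := g_le A hA j.rev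
  unfold ΨF
  omega

lemma ΦA_ΨF (A : Finset (Fin (s + t))) (hA : A.card = t) :
    ΦA s t (ΨF A hA) (ΨF_le A hA) = A := by
  have hval : ∀ i : Fin t, (eF s t (ΨF A hA) (ΨF_le A hA) i : ℕ)
      = ((A.orderEmbOfFin hA) i : ℕ) := by
    intro i
    show ΨF A hA i.rev + (i : ℕ) = _
    unfold ΨF
    rw [Fin.rev_rev]
    have := g_ge A hA i
    omega
  have heF : eF s t (ΨF A hA) (ΨF_le A hA) = fun i => (A.orderEmbOfFin hA) i := by
    funext i; exact Fin.ext (hval i)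
  rw [ΦA, heF]
  ext x
  simp only [Finset.mem_image, Finset.mem_univ, true_and]
  constructor
  · rintro ⟨i, rfl⟩; exact A.orderEmbOfFin_mem hA i
  · intro hx
    have : x ∈ Set.range (A.orderEmbOfFin hA) := by
      rw [Finset.range_orderEmbOfFin]; exact hx
    obtain ⟨i, hi⟩ := this
    exact ⟨i, hi⟩

lemma ΨF_ΦA {f : Fin t → ℕ} (hmono : Antitone f) (hbd : ∀ i, f i ≤ s) :
    ΨF (ΦA s t f hbd) (ΦA_card s t hmono hbd) = f := by
  have huniq : eF s t f hbd = ⇑((ΦA s t f hbd).orderEmbOfFin (ΦA_card s t hmono hbd)) :=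
    Finset.orderEmbOfFin_unique (ΦA_card s t hmono hbd)
      (fun i => Finset.mem_image_of_mem _ (Finset.mem_univ i)) (eF_strictMono s t hmono hbd)
  funext j
  unfold ΨF
  rw [← huniq]
  show f j.rev.rev + (j.rev : ℕ) - (j.rev : ℕ) = f j
  rw [Fin.rev_rev]
  omega

/-- the bijection between hook codes and sets -/
def Φequiv (s t : ℕ) :
    {f : Fin t → ℕ // Antitone f ∧ ∀ i, f i ≤ s} ≃ {A : Finset (Fin (s + t)) // A.card = t} where
  toFun x := ⟨ΦA s t x.1 x.2.2, ΦA_card s t x.2.1 x.2.2⟩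
  invFun y := ⟨ΨF y.1 y.2, ΨF_antitone y.1 y.2, ΨF_le y.1 y.2⟩
  left_inv x := by
    ext1
    exact ΨF_ΦA x.2.1 x.2.2
  right_inv y := by
    ext1
    exact ΦA_ΨF y.1 y.2

end Psi

/-- reflection bijection between bad sets and sets of size `s + δ + 1` -/
noncomputable def badEquiv (s t δ : ℕ) (hts : t ≤ s + δ + 1) :
    {A : Finset (Fin (s + t)) // A.card = t ∧ isBad (s + t) (δ + 1) A} ≃
      {A : Finset (Fin (s + t)) // A.card = s + δ + 1} where
  toFun x := ⟨reflectA (s + t) (δ + 1) x.1, by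
    have spec := reflectA_spec x.2.2
    have := x.2.1
    omega⟩
  invFun y := by
    have hbad : isBad (s + t) (δ + 1) y.1 := by
      apply exists_touch_of_ge (by omega)
      exact ⟨s + t, le_rfl, by rw [upc_of_le _ le_rfl, y.2]; omega⟩
    have spec := reflectA_spec hbad
    exact ⟨reflectA (s + t) (δ + 1) y.1, by have := y.2; omega, spec.1⟩
  left_inv x := Subtype.ext (reflectA_spec x.2.2).2.2
  right_inv y := by
    have hbad : isBad (s + t) (δ + 1) y.1 := by
      apply exists_touch_of_ge (by omega)
      exact ⟨s + t, le_rfl, by rw [upc_of_le _ le_rfl, y.2]; omega⟩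
    exact Subtype.ext (reflectA_spec hbad).2.2

/-- The invariant `κ(P)` for a partition `P` (given via its hook code) lying in a `t × s` box:
`κ(P) = s + max{t+1-s, 0, τ_1, …, τ_n}` where `τ_k = (l_k + ⋯ + l_n) - h_k`. -/
def boxKappa (s t : ℕ) (f : Fin t → ℕ) : ℤ :=
  s + Finset.fold max (max ((t : ℤ) + 1 - s) 0)
    (fun j => ((Finset.univ.filter fun i => f i ≤ f j).card : ℤ) - f j) Finset.univ

lemma kappa_iff (s t δ : ℕ) (hδ : δ = t + 1 - s) (f : Fin t → ℕ) :
    boxKappa s t f = (s : ℤ) + δ ↔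
      ∀ j : Fin t, (Finset.univ.filter fun i : Fin t => f i ≤ f j).card ≤ f j + δ := by
  have hbase : max ((t : ℤ) + 1 - s) 0 = (δ : ℤ) := by
    rcases le_total ((t : ℤ) + 1 - (s : ℤ)) 0 with h | h
    · rw [max_eq_right h]; omega
    · rw [max_eq_left h]; omega
  unfold boxKappa
  rw [hbase]
  rw [add_right_inj]
  have hge : (δ : ℤ) ≤ Finset.fold max (δ : ℤ)
      (fun j => ((Finset.univ.filter fun i : Fin t => f i ≤ f j).card : ℤ) - (f j : ℤ))
      Finset.univ := (Finset.le_fold_max _).mpr (Or.inl le_rfl)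
  constructor
  · intro h j
    have hle : ((Finset.univ.filter fun i : Fin t => f i ≤ f j).card : ℤ) - (f j : ℤ)
        ≤ (δ : ℤ) := ((Finset.fold_max_le _).mp h.le).2 j (Finset.mem_univ j)
    omega
  · intro h
    refine le_antisymm ?_ hge
    refine (Finset.fold_max_le _).mpr ⟨le_rfl, ?_⟩
    intro j _
    have := h j
    omega

/-- For a single-block Hilbert function `T = (1,…,d,t,0)`, `s = d+1-t`, `δ = max{t+1-s,0}`,
the number of non-special partitions of diagonal lengths `T` (those with `κ(P) = s+δ`,
identified with their hook codes in a `t × s` box) is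
`(s+t).choose s - (s+t).choose (s+δ+1)`. -/
theorem card_nonspecial (d t s δ : ℕ) (ht : 0 < t) (htd : t ≤ d)
    (hs : s = d + 1 - t) (hδ : δ = t + 1 - s) :
    Nat.card {f : Fin t → ℕ // Antitone f ∧ (∀ i, f i ≤ s) ∧
        boxKappa s t f = (s : ℤ) + δ} =
      Nat.choose (s + t) s - Nat.choose (s + t) (s + δ + 1) := by
  have hts : t ≤ s + δ + 1 := by omega
  -- transport to the set model
  have E0 : {f : Fin t → ℕ // Antitone f ∧ (∀ i, f i ≤ s) ∧ boxKappa s t f = (s : ℤ) + δ} ≃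
      {f : Fin t → ℕ // (Antitone f ∧ ∀ i, f i ≤ s) ∧
        ∀ j : Fin t, (Finset.univ.filter fun i : Fin t => f i ≤ f j).card ≤ f j + δ} :=
    Equiv.subtypeEquivRight (fun f => by rw [kappa_iff s t δ hδ f]; tauto)
  have E1 : {f : Fin t → ℕ // (Antitone f ∧ ∀ i, f i ≤ s) ∧
        ∀ j : Fin t, (Finset.univ.filter fun i : Fin t => f i ≤ f j).card ≤ f j + δ} ≃
      {x : {f : Fin t → ℕ // Antitone f ∧ ∀ i, f i ≤ s} //
        ∀ j : Fin t, (Finset.univ.filter fun i : Fin t => x.1 i ≤ x.1 j).card ≤ x.1 j + δ} :=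
    (Equiv.subtypeSubtypeEquivSubtypeInter _ _).symm
  have E2 : {x : {f : Fin t → ℕ // Antitone f ∧ ∀ i, f i ≤ s} //
        ∀ j : Fin t, (Finset.univ.filter fun i : Fin t => x.1 i ≤ x.1 j).card ≤ x.1 j + δ} ≃
      {y : {A : Finset (Fin (s + t)) // A.card = t} // ¬ isBad (s + t) (δ + 1) y.1} := by
    refine (Φequiv s t).subtypeEquiv (fun x => ?_)
    have htr := transfer s t x.2.1 x.2.2 (c := δ + 1) (Nat.succ_pos δ)
    constructor
    · intro h hbad
      obtain ⟨j, hj⟩ := htr.mp hbad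
      have := h j
      omega
    · intro h j
      by_contra hcon
      exact h (htr.mpr ⟨j, by omega⟩)
  have E3 : {y : {A : Finset (Fin (s + t)) // A.card = t} // ¬ isBad (s + t) (δ + 1) y.1} ≃
      {A : Finset (Fin (s + t)) // A.card = t ∧ ¬ isBad (s + t) (δ + 1) A} :=
    Equiv.subtypeSubtypeEquivSubtypeInter (fun A : Finset (Fin (s + t)) => A.card = t)
      (fun A => ¬ isBad (s + t) (δ + 1) A)
  rw [Nat.card_congr (((E0.trans E1).trans E2).trans E3)]
  -- counting on the set side
  rw [Nat.card_eq_fintype_card]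
  have hbadcount : Fintype.card
        {A : Finset (Fin (s + t)) // A.card = t ∧ isBad (s + t) (δ + 1) A}
      = Nat.choose (s + t) (s + δ + 1) := by
    rw [← Nat.card_eq_fintype_card, Nat.card_congr (badEquiv s t δ hts),
      Nat.card_eq_fintype_card]
    simpa using Fintype.card_finset_len (α := Fin (s + t)) (s + δ + 1)
  have htot : Fintype.card {A : Finset (Fin (s + t)) // A.card = t}
      = Nat.choose (s + t) t := by
    simpa using Fintype.card_finset_len (α := Fin (s + t)) t
  have hsplit : Fintype.card
        {A : Finset (Fin (s + t)) // A.card = t ∧ isBad (s + t) (δ + 1) A}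
      + Fintype.card {A : Finset (Fin (s + t)) // A.card = t ∧ ¬ isBad (s + t) (δ + 1) A}
      = Fintype.card {A : Finset (Fin (s + t)) // A.card = t} := by
    rw [Fintype.card_subtype, Fintype.card_subtype, Fintype.card_subtype]
    rw [← Finset.filter_filter, ← Finset.filter_filter]
    exact Finset.card_filter_add_card_filter_not
      (s := Finset.univ.filter fun A : Finset (Fin (s + t)) => A.card = t)
      (p := fun A => isBad (s + t) (δ + 1) A)
  have hsymm : Nat.choose (s + t) t = Nat.choose (s + t) s := by
    have h := Nat.choose_symm (by omega : t ≤ s + t)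
    simpa using h.symm
  omega
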